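/- arXiv:1308.6696 — 2 statements merged into one kernel-verified Lean document; each statement's English description precedes it below -/
import Mathlib

section
/- For every real q < √2 there exists n₀ such that for every n ≥ n₀: every n-uniform hypergraph whose chromatic number is greater than 2 has at least q · (n/ln n)^{1/2} · 2^{n−1} edges; that is, m(n) ≥ q · (n/ln n)^{1/2} · 2^{n−1}. -/
open Finset Filter

section RSproof
variable {V : Type} [DecidableEq V]

def red (E : Finset (Finset V)) (σ : V → ℕ) (v : V) : Prop :=
  ∃ e ∈ E, v ∈ e ∧ ∀ w ∈ e, w ≠ v → ∃ _ : σ w < σ v, ¬ red E σ w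
termination_by σ v
decreasing_by assumption

lemma red_iff (E : Finset (Finset V)) (σ : V → ℕ) (v : V) :
    red E σ v ↔ ∃ e ∈ E, v ∈ e ∧ ∀ w ∈ e, w ≠ v → σ w < σ v ∧ ¬ red E σ w := by
  rw [red]
  constructor
  · rintro ⟨e, he, hv, h⟩
    exact ⟨e, he, hv, fun w hw hwv => by obtain ⟨h1, h2⟩ := h w hw hwv; exact ⟨h1, h2⟩⟩
  · rintro ⟨e, he, hv, h⟩
    exact ⟨e, he, hv, fun w hw hwv => ⟨(h w hw hwv).1, (h w hw hwv).2⟩⟩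

def verts (E : Finset (Finset V)) : Finset V := E.sup id

lemma mem_verts {E : Finset (Finset V)} {e : Finset V} {v : V} (he : e ∈ E) (hv : v ∈ e) :
    v ∈ verts E := Finset.mem_sup.2 ⟨e, he, hv⟩

open Classical in
lemma exists_conflict (E : Finset (Finset V)) (hne : ∀ e ∈ E, e.Nonempty)
    (σ : V → ℕ) (hinj : Set.InjOn σ (verts E))
    (hcol : ∀ c : V → Fin 2, ∃ A ∈ E, ∃ i : Fin 2, ∀ v ∈ A, c v = i) :
    ∃ e ∈ E, ∃ f ∈ E, ∃ u : V, e ∩ f = {u} ∧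
      (∀ w ∈ e, w ≠ u → σ w < σ u) ∧ (∀ w ∈ f, w ≠ u → σ u < σ w) := by
  obtain ⟨A, hA, i, hi⟩ := hcol (fun c => if red E σ c then 1 else 0)
  have hAne := hne A hA
  have strict : ∀ {x y : V}, x ∈ A → y ∈ A → x ≠ y → σ x ≤ σ y → σ x < σ y := by
    intro x y hx hy hxy hle
    rcases lt_or_eq_of_le hle with h | h
    · exact h
    · exact absurd (hinj (mem_verts hA hx) (mem_verts hA hy) h) hxy
  have hredA : ∀ v ∈ A, red E σ v := by
    -- if some v in A were not red, then i = 0, so all of A is non-red ... then max of A is red, contra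
    by_contra hnot
    push_neg at hnot
    obtain ⟨v0, hv0, hv0r⟩ := hnot
    have hi0 : i = 0 := by
      have := hi v0 hv0
      simpa [hv0r] using this.symm
    have hblue : ∀ v ∈ A, ¬ red E σ v := by
      intro v hv hr
      have := hi v hv
      rw [hi0, if_pos hr] at this
      exact one_ne_zero this
    obtain ⟨u, hu, humax⟩ := A.exists_max_image σ hAne
    refine hblue u hu ((red_iff E σ u).2 ⟨A, hA, hu, fun w hw hwu => ⟨strict hw hu hwu (humax w hw), hblue w hw⟩⟩)
  -- all of A red: take the σ-min u
  obtain ⟨u, hu, humin⟩ := A.exists_min_image σ hAne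
  obtain ⟨e, he, hue, hw⟩ := (red_iff E σ u).1 (hredA u hu)
  refine ⟨e, he, A, hA, u, ?_, fun w hw' hwu => (hw w hw' hwu).1, ?_⟩
  · ext x
    simp only [mem_inter, mem_singleton]
    constructor
    · rintro ⟨hxe, hxA⟩
      by_contra hxu
      exact (hw x hxe hxu).2 (hredA x hxA)
    · rintro rfl; exact ⟨hue, hu⟩
  · intro w hw' hwu
    exact strict hu hw' (Ne.symm hwu) (humin w hw')

section counting2
open scoped Classical
variable [Fintype V]

/-- generic counting bound -/
lemma card_filter_le_prod {N : ℕ} (s : Finset (V → Fin N)) (T : V → Finset (Fin N))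
    (h : ∀ σ ∈ s, ∀ v, σ v ∈ T v) :
    s.card ≤ ∏ v, (T v).card := by
  have hsub : s ⊆ Fintype.piFinset T := by
    intro σ hσ
    rw [Fintype.mem_piFinset]
    exact h σ hσ
  simpa [Fintype.card_piFinset] using card_le_card hsub

lemma card_fin_lt (N A : ℕ) (hA : A ≤ N) :
    (univ.filter fun x : Fin N => (x : ℕ) < A).card = A := by
  have : (univ.filter fun x : Fin N => (x : ℕ) < A).image Fin.val = Finset.range A := by
    ext y
    simp only [mem_image, mem_filter, mem_univ, true_and, mem_range]
    constructor
    · rintro ⟨x, hx, rfl⟩; exact hx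
    · intro hy; exact ⟨⟨y, lt_of_lt_of_le hy hA⟩, hy, rfl⟩
  rw [← Finset.card_image_of_injective _ Fin.val_injective, this, Finset.card_range]

lemma card_fin_le (N B : ℕ) :
    (univ.filter fun x : Fin N => B ≤ (x : ℕ)).card = N - B := by
  have : (univ.filter fun x : Fin N => B ≤ (x : ℕ)).image Fin.val = Finset.Ico B N := by
    ext y
    simp only [mem_image, mem_filter, mem_univ, true_and, mem_Ico]
    constructor
    · rintro ⟨x, hx, rfl⟩; exact ⟨hx, x.isLt⟩
    · rintro ⟨h1, h2⟩; exact ⟨⟨y, h2⟩, h1, rfl⟩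
  rw [← Finset.card_image_of_injective _ Fin.val_injective, this, Nat.card_Ico]

lemma card_fin_gt (N t : ℕ) :
    (univ.filter fun x : Fin N => t < (x : ℕ)).card = N - (t + 1) := by
  simpa using card_fin_le N (t+1)

lemma card_fin_eq (N t : ℕ) (ht : t < N) :
    (univ.filter fun x : Fin N => (x : ℕ) = t).card = 1 := by
  rw [Finset.card_eq_one]
  exact ⟨⟨t, ht⟩, by ext x; simp [Fin.ext_iff]⟩



noncomputable def lowE (e : Finset V) (N A : ℕ) : Finset (V → Fin N) :=
  univ.filter fun σ => ∀ v ∈ e, (σ v : ℕ) < A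

noncomputable def highE (e : Finset V) (N B : ℕ) : Finset (V → Fin N) :=
  univ.filter fun σ => ∀ v ∈ e, B ≤ (σ v : ℕ)

noncomputable def confE (e f : Finset V) (N A B : ℕ) : Finset (V → Fin N) :=
  univ.filter fun σ => ∃ u, e ∩ f = {u} ∧ A ≤ (σ u : ℕ) ∧ (σ u : ℕ) < B ∧
    (∀ w ∈ e, w ≠ u → (σ w : ℕ) < (σ u : ℕ)) ∧ (∀ w ∈ f, w ≠ u → (σ u : ℕ) < (σ w : ℕ))

noncomputable def injE (W : Finset V) (N : ℕ) : Finset (V → Fin N) :=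
  univ.filter fun σ => ¬ Set.InjOn (fun v => (σ v : ℕ)) W

lemma card_lowE (e : Finset V) {N A : ℕ} (hA : A ≤ N) :
    (lowE e N A).card ≤ A ^ e.card * N ^ (eᶜ.card : ℕ) := by
  have h := card_filter_le_prod (lowE e N A)
    (fun v => if v ∈ e then univ.filter (fun x : Fin N => (x : ℕ) < A) else univ)
    (by
      intro σ hσ' v
      have hσ : ∀ v ∈ e, ((σ v : ℕ)) < A := (mem_filter.mp hσ').2
      by_cases hv : v ∈ e
      · simp only [if_pos hv, mem_filter, mem_univ, true_and]; exact hσ v hv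
      · simp [if_neg hv])
  refine le_trans h (le_of_eq ?_)
  have h1 : ∀ v ∈ e, #((fun v => if v ∈ e then univ.filter (fun x : Fin N => (x : ℕ) < A) else univ) v) = A := by
    intro v hv; simp only [if_pos hv]; exact card_fin_lt N A hA
  have h2 : ∀ v ∈ eᶜ, #((fun v => if v ∈ e then univ.filter (fun x : Fin N => (x : ℕ) < A) else univ) v) = N := by
    intro v hv; simp only [if_neg (mem_compl.mp hv)]; simp
  rw [← Finset.prod_mul_prod_compl e, Finset.prod_congr rfl h1, Finset.prod_congr rfl h2,
    Finset.prod_const, Finset.prod_const]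

lemma card_highE (e : Finset V) {N B : ℕ} :
    (highE e N B).card ≤ (N - B) ^ e.card * N ^ (eᶜ.card : ℕ) := by
  have h := card_filter_le_prod (highE e N B)
    (fun v => if v ∈ e then univ.filter (fun x : Fin N => B ≤ (x : ℕ)) else univ)
    (by
      intro σ hσ' v
      have hσ : ∀ v ∈ e, B ≤ ((σ v : ℕ)) := (mem_filter.mp hσ').2
      by_cases hv : v ∈ e
      · simp only [if_pos hv, mem_filter, mem_univ, true_and]; exact hσ v hv
      · simp [if_neg hv])
  refine le_trans h (le_of_eq ?_)
  have h1 : ∀ v ∈ e, #((fun v => if v ∈ e then univ.filter (fun x : Fin N => B ≤ (x : ℕ)) else univ) v) = N - B := by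
    intro v hv; simp only [if_pos hv]; exact card_fin_le N B
  have h2 : ∀ v ∈ eᶜ, #((fun v => if v ∈ e then univ.filter (fun x : Fin N => B ≤ (x : ℕ)) else univ) v) = N := by
    intro v hv; simp only [if_neg (mem_compl.mp hv)]; simp
  rw [← Finset.prod_mul_prod_compl e, Finset.prod_congr rfl h1, Finset.prod_congr rfl h2,
    Finset.prod_const, Finset.prod_const]


lemma card_confE {e f : Finset V} {N A B n : ℕ} (hB : B ≤ N)
    (hce : e.card = n) (hcf : f.card = n) :
    (confE e f N A B).card ≤
      (∑ t ∈ Finset.Ico A B, t ^ (n-1) * (N - (t+1)) ^ (n-1)) * N ^ ((e ∪ f)ᶜ.card : ℕ) := by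
  by_cases hne : (confE e f N A B).Nonempty
  · obtain ⟨σ₀, hσ₀⟩ := hne
    obtain ⟨u, huef, -⟩ := (mem_filter.mp hσ₀).2
    have hue : u ∈ e := (mem_inter.mp (huef ▸ mem_singleton_self u)).1
    have huf : u ∈ f := (mem_inter.mp (huef ▸ mem_singleton_self u)).2
    have honly : ∀ x, x ∈ e → x ∈ f → x = u := by
      intro x hxe hxf
      have := huef ▸ (mem_inter.mpr ⟨hxe, hxf⟩)
      exact mem_singleton.mp this
    -- subset of biUnion over t
    have hsub : confE e f N A B ⊆ (Finset.Ico A B).biUnion (fun t =>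
        univ.filter fun σ : V → Fin N => (σ u : ℕ) = t ∧
          (∀ w ∈ e, w ≠ u → (σ w : ℕ) < t) ∧ (∀ w ∈ f, w ≠ u → t < (σ w : ℕ))) := by
      intro σ hσ
      obtain ⟨u', h1, h2, h3, h4, h5⟩ := (mem_filter.mp hσ).2
      have : u' = u := by
        have := h1.symm.trans huef
        exact singleton_injective this
      subst this
      refine mem_biUnion.mpr ⟨(σ u' : ℕ), mem_Ico.mpr ⟨h2, h3⟩, ?_⟩
      exact mem_filter.mpr ⟨mem_univ _, rfl, h4, h5⟩
    refine le_trans (card_le_card hsub) (le_trans (card_biUnion_le) ?_)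
    rw [Finset.sum_mul]
    refine Finset.sum_le_sum ?_
    intro t ht
    have htN : t < N := lt_of_lt_of_le (mem_Ico.mp ht).2 hB
    have h := card_filter_le_prod (univ.filter fun σ : V → Fin N => (σ u : ℕ) = t ∧
          (∀ w ∈ e, w ≠ u → (σ w : ℕ) < t) ∧ (∀ w ∈ f, w ≠ u → t < (σ w : ℕ)))
      (fun v => if v = u then univ.filter (fun x : Fin N => (x : ℕ) = t)
        else if v ∈ e then univ.filter (fun x : Fin N => (x : ℕ) < t)
        else if v ∈ f then univ.filter (fun x : Fin N => t < (x : ℕ)) else univ)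
      (by
        intro σ hσ v
        obtain ⟨h1, h2, h3⟩ := (mem_filter.mp hσ).2
        show σ v ∈ (if v = u then univ.filter (fun x : Fin N => (x : ℕ) = t)
          else if v ∈ e then univ.filter (fun x : Fin N => (x : ℕ) < t)
          else if v ∈ f then univ.filter (fun x : Fin N => t < (x : ℕ)) else univ)
        by_cases hvu : v = u
        · subst hvu
          rw [if_pos rfl]
          exact mem_filter.mpr ⟨mem_univ _, h1⟩
        · rw [if_neg hvu]
          by_cases hve : v ∈ e
          · simp only [if_pos hve, mem_filter, mem_univ, true_and]; exact h2 v hve hvu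
          · rw [if_neg hve]
            by_cases hvf : v ∈ f
            · simp only [if_pos hvf, mem_filter, mem_univ, true_and]; exact h3 v hvf hvu
            · simp [if_neg hvf])
    refine le_trans h (le_of_eq ?_)
    -- compute the product
    set T : V → Finset (Fin N) := (fun v => if v = u then univ.filter (fun x : Fin N => (x : ℕ) = t)
        else if v ∈ e then univ.filter (fun x : Fin N => (x : ℕ) < t)
        else if v ∈ f then univ.filter (fun x : Fin N => t < (x : ℕ)) else univ) with hT
    have hcompl : ∀ v ∈ (e ∪ f)ᶜ, (T v).card = N := by
      intro v hv
      have hv' := mem_compl.mp hv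
      have hve : v ∉ e := fun h => hv' (mem_union_left _ h)
      have hvf : v ∉ f := fun h => hv' (mem_union_right _ h)
      have hvu : v ≠ u := fun h => hve (h ▸ hue)
      simp [hT, if_neg hvu, if_neg hve, if_neg hvf]
    have hdecomp : e ∪ f = insert u ((e.erase u) ∪ (f.erase u)) := by
      ext x
      simp only [mem_union, mem_insert, mem_erase]
      constructor
      · rintro (hx | hx)
        · by_cases hxu : x = u
          · exact Or.inl hxu
          · exact Or.inr (Or.inl ⟨hxu, hx⟩)
        · by_cases hxu : x = u
          · exact Or.inl hxu
          · exact Or.inr (Or.inr ⟨hxu, hx⟩)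
      · rintro (rfl | ⟨-, hx⟩ | ⟨-, hx⟩)
        · exact Or.inl hue
        · exact Or.inl hx
        · exact Or.inr hx
    have hdisj : Disjoint (e.erase u) (f.erase u) := by
      rw [Finset.disjoint_left]
      intro x hx hx'
      exact (mem_erase.mp hx).1 (honly x (mem_erase.mp hx).2 (mem_erase.mp hx').2)
    have hnotmem : u ∉ (e.erase u) ∪ (f.erase u) := by
      simp
    rw [← Finset.prod_mul_prod_compl (e ∪ f), Finset.prod_congr rfl hcompl, Finset.prod_const]
    congr 1
    rw [hdecomp, Finset.prod_insert hnotmem, Finset.prod_union hdisj]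
    have hTe : ∀ v ∈ e.erase u, (T v).card = t := by
      intro v hv
      obtain ⟨hvu, hve⟩ := mem_erase.mp hv
      simp only [hT, if_neg hvu, if_pos hve]
      exact card_fin_lt N t (le_of_lt htN)
    have hTf : ∀ v ∈ f.erase u, (T v).card = N - (t+1) := by
      intro v hv
      obtain ⟨hvu, hvf⟩ := mem_erase.mp hv
      have hve : v ∉ e := fun h => hvu (honly v h hvf)
      simp only [hT, if_neg hvu, if_neg hve, if_pos hvf]
      exact card_fin_gt N t
    rw [Finset.prod_congr rfl hTe, Finset.prod_congr rfl hTf, Finset.prod_const,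
      Finset.prod_const, Finset.card_erase_of_mem hue, Finset.card_erase_of_mem huf,
      hce, hcf]
    simp only [hT, if_pos rfl, ↓reduceIte]
    rw [card_fin_eq N t htN]
    ring
  · rw [Finset.not_nonempty_iff_eq_empty.mp hne]
    simp

lemma card_injE (W : Finset V) {N : ℕ} :
    (injE W N).card ≤ W.card ^ 2 * N ^ (Fintype.card V - 1) := by
  by_cases hne : (injE W N).Nonempty
  ·
    have hsub : injE W N ⊆ ((W ×ˢ W).filter fun p => p.1 ≠ p.2).biUnion
        (fun p => univ.filter fun σ : V → Fin N => σ p.1 = σ p.2) := by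
      intro σ hσ
      have h := (mem_filter.mp hσ).2
      rw [Set.InjOn] at h
      push_neg at h
      obtain ⟨x, hx, y, hy, hxy, hne'⟩ := h
      refine mem_biUnion.mpr ⟨(x, y), mem_filter.mpr ⟨mem_product.mpr ⟨hx, hy⟩, hne'⟩, ?_⟩
      exact mem_filter.mpr ⟨mem_univ _, Fin.ext hxy⟩
    refine le_trans (card_le_card hsub) (le_trans card_biUnion_le ?_)
    have hcard2 : 2 ≤ Fintype.card V := by
      obtain ⟨σ, hσ⟩ := hne
      have h := (mem_filter.mp hσ).2
      rw [Set.InjOn] at h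
      push_neg at h
      obtain ⟨x, -, y, -, -, hne'⟩ := h
      have : Nontrivial V := ⟨x, y, hne'⟩
      exact Fintype.one_lt_card
    have hbound : ∀ p ∈ (W ×ˢ W).filter fun p : V × V => p.1 ≠ p.2,
        (univ.filter fun σ : V → Fin N => σ p.1 = σ p.2).card ≤ N ^ (Fintype.card V - 1) := by
      rintro ⟨x, y⟩ hp
      have hxy : x ≠ y := (mem_filter.mp hp).2
      have hsub2 : (univ.filter fun σ : V → Fin N => σ x = σ y) ⊆
          (univ : Finset (Fin N)).biUnion (fun c =>
            univ.filter fun σ : V → Fin N => σ x = c ∧ σ y = c) := by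
        intro σ hσ
        exact mem_biUnion.mpr ⟨σ y, mem_univ _, mem_filter.mpr ⟨mem_univ _,
          (mem_filter.mp hσ).2, rfl⟩⟩
      refine le_trans (card_le_card hsub2) (le_trans card_biUnion_le ?_)
      have hone : ∀ c : Fin N, (univ.filter fun σ : V → Fin N => σ x = c ∧ σ y = c).card
          ≤ N ^ (({x, y}ᶜ : Finset V).card) := by
        intro c
        have h := card_filter_le_prod (univ.filter fun σ : V → Fin N => σ x = c ∧ σ y = c)
          (fun v => if v ∈ ({x, y} : Finset V) then {c} else univ)
          (by
            intro σ hσ v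
            obtain ⟨h1, h2⟩ := (mem_filter.mp hσ).2
            show σ v ∈ (if v ∈ ({x, y} : Finset V) then {c} else univ)
            by_cases hv : v ∈ ({x, y} : Finset V)
            · rw [if_pos hv]
              rcases mem_insert.mp hv with rfl | hv'
              · simpa using h1
              · rw [mem_singleton.mp hv']; simpa using h2
            · rw [if_neg hv]; exact mem_univ _)
        refine le_trans h (le_of_eq ?_)
        rw [← Finset.prod_mul_prod_compl ({x, y} : Finset V)]
        have h1 : ∀ v ∈ ({x, y} : Finset V),
            #((fun v => if v ∈ ({x, y} : Finset V) then ({c} : Finset (Fin N)) else univ) v) = 1 := by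
          intro v hv; simp only [if_pos hv]; exact card_singleton c
        have h2 : ∀ v ∈ ({x, y} : Finset V)ᶜ,
            #((fun v => if v ∈ ({x, y} : Finset V) then ({c} : Finset (Fin N)) else univ) v) = N := by
          intro v hv; simp only [if_neg (mem_compl.mp hv)]; simp
        rw [Finset.prod_congr rfl h1, Finset.prod_congr rfl h2, Finset.prod_const,
          Finset.prod_const, one_pow, one_mul]
      refine le_trans (Finset.sum_le_sum (fun c _ => hone c)) ?_
      rw [Finset.sum_const, Finset.card_univ, Fintype.card_fin, smul_eq_mul]
      have hc : ({x, y}ᶜ : Finset V).card = Fintype.card V - 2 := by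
        rw [Finset.card_compl, Finset.card_insert_of_notMem (by simpa using hxy),
          Finset.card_singleton]
      rw [hc]
      refine le_of_eq ?_
      rw [← pow_succ']
      congr 1
      omega
    refine le_trans (Finset.sum_le_sum hbound) ?_
    rw [Finset.sum_const, smul_eq_mul]
    have : (((W ×ˢ W).filter fun p : V × V => p.1 ≠ p.2)).card ≤ W.card ^ 2 := by
      calc _ ≤ (W ×ˢ W).card := card_filter_le _ _
        _ = W.card ^ 2 := by rw [Finset.card_product]; ring
    exact Nat.mul_le_mul_right _ this
  · rw [Finset.not_nonempty_iff_eq_empty.mp hne]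
    simp

lemma cover (E : Finset (Finset V)) (hne : ∀ e ∈ E, e.Nonempty) (N A B : ℕ)
    (hcol : ∀ c : V → Fin 2, ∃ A ∈ E, ∃ i : Fin 2, ∀ v ∈ A, c v = i) :
    (univ : Finset (V → Fin N)) ⊆
      injE (verts E) N ∪ E.biUnion (fun e => lowE e N A) ∪ E.biUnion (fun e => highE e N B)
        ∪ (E ×ˢ E).biUnion (fun p => confE p.1 p.2 N A B) := by
  intro σ _
  by_cases hinj : Set.InjOn (fun v => (σ v : ℕ)) (verts E)
  · obtain ⟨e, he, f, hf, u, huef, hel, hfg⟩ := exists_conflict E hne _ hinj hcol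
    have hue : u ∈ e := (mem_inter.mp (huef ▸ mem_singleton_self u)).1
    have huf : u ∈ f := (mem_inter.mp (huef ▸ mem_singleton_self u)).2
    rcases lt_or_ge (σ u : ℕ) A with hA | hA
    · refine mem_union_left _ (mem_union_left _ (mem_union_right _ ?_))
      refine mem_biUnion.mpr ⟨e, he, mem_filter.mpr ⟨mem_univ _, ?_⟩⟩
      intro v hv
      by_cases hvu : v = u
      · exact hvu ▸ hA
      · exact lt_trans (hel v hv hvu) hA
    · rcases lt_or_ge (σ u : ℕ) B with hB | hB
      · refine mem_union_right _ ?_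
        refine mem_biUnion.mpr ⟨(e, f), mem_product.mpr ⟨he, hf⟩, ?_⟩
        exact mem_filter.mpr ⟨mem_univ _, u, huef, hA, hB, hel, hfg⟩
      · refine mem_union_left _ (mem_union_right _ ?_)
        refine mem_biUnion.mpr ⟨f, hf, mem_filter.mpr ⟨mem_univ _, ?_⟩⟩
        intro v hv
        by_cases hvu : v = u
        · exact hvu ▸ hB
        · exact le_of_lt (lt_of_le_of_lt hB (hfg v hv hvu))
  · exact mem_union_left _ (mem_union_left _ (mem_union_left _
      (mem_filter.mpr ⟨mem_univ _, hinj⟩)))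

lemma main_count (E : Finset (Finset V)) (n N A B : ℕ)
    (hn : 1 ≤ n) (hN : 0 < N) (hAB : A ≤ B) (hBN : B ≤ N)
    (hcards : ∀ e ∈ E, e.card = n)
    (hcol : ∀ c : V → Fin 2, ∃ A ∈ E, ∃ i : Fin 2, ∀ v ∈ A, c v = i) :
    1 ≤ (((verts E).card : ℝ) ^ 2) / N + E.card * ((A : ℝ) / N) ^ n
        + E.card * (((N - B : ℕ) : ℝ) / N) ^ n
        + (E.card : ℝ) ^ 2 * (((B - A : ℕ) : ℝ) / N) * ((1:ℝ)/4) ^ (n - 1) := by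
  classical
  set R := Fintype.card V with hR
  set W := (verts E).card with hW
  set m := E.card with hm
  have hAN : A ≤ N := le_trans hAB hBN
  have hne : ∀ e ∈ E, e.Nonempty := fun e he => Finset.card_pos.mp (by rw [hcards e he]; omega)
  -- n ≤ R
  obtain ⟨e₀, he₀, -⟩ := hcol (fun _ => 0)
  have hnR : n ≤ R := by
    rw [← hcards e₀ he₀]
    exact le_trans (Finset.card_le_univ e₀) (le_of_eq Finset.card_univ)
  have hR1 : 1 ≤ R := le_trans hn hnR
  -- ℕ counting
  have hcards' : (univ : Finset (V → Fin N)).card = N ^ R := by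
    rw [Finset.card_univ]
    simp [hR]
  have hchain : (N : ℝ) ^ R ≤ (W:ℝ)^2 * (N:ℝ)^(R-1) + m * (A:ℝ)^n * (N:ℝ)^(R-n)
      + m * ((N - B : ℕ):ℝ)^n * (N:ℝ)^(R-n)
      + (m:ℝ)^2 * ((B - A : ℕ):ℝ) * ((1:ℝ)/4)^(n-1) * (N:ℝ)^(R-1) := by
    have h1 := card_le_card (cover E hne N A B hcol)
    have h2 := le_trans h1 (le_trans (card_union_le _ _) (add_le_add_left (le_trans
      (card_union_le _ _) (add_le_add_left (card_union_le _ _) _)) _))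
    -- h2 : N^R ≤ cInj + cLow + cHigh + cConf  (cards of unions)
    have h3 := le_trans h2 (add_le_add (add_le_add (add_le_add le_rfl
      (card_biUnion_le (s := E) (t := fun e => lowE e N A)))
      (card_biUnion_le (s := E) (t := fun e => highE e N B)))
      (card_biUnion_le (s := E ×ˢ E) (t := fun p => confE p.1 p.2 N A B)))
    rw [hcards'] at h3
    -- now bound each term in ℝ
    have hinjR : ((injE (verts E) N).card : ℝ) ≤ (W:ℝ)^2 * (N:ℝ)^(R-1) := by
      have := card_injE (verts E) (N := N)
      calc ((injE (verts E) N).card : ℝ) ≤ ((W^2 * N^(R-1) : ℕ) : ℝ) := by exact_mod_cast this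
        _ = _ := by push_cast; ring
    have hlowR : ((∑ e ∈ E, (lowE e N A).card : ℕ) : ℝ) ≤ m * (A:ℝ)^n * (N:ℝ)^(R-n) := by
      push_cast
      calc (∑ e ∈ E, ((lowE e N A).card : ℝ))
          ≤ ∑ _e ∈ E, ((A:ℝ)^n * (N:ℝ)^(R-n)) := by
            refine Finset.sum_le_sum ?_
            intro e he
            have h := card_lowE e (N := N) (A := A) hAN
            rw [hcards e he] at h
            have hc : (eᶜ : Finset V).card = R - n := by
              rw [Finset.card_compl, hcards e he, hR]
            rw [hc] at h
            exact_mod_cast h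
        _ = m * ((A:ℝ)^n * (N:ℝ)^(R-n)) := by rw [Finset.sum_const, hm]; simp [nsmul_eq_mul]
        _ = _ := by ring
    have hhighR : ((∑ e ∈ E, (highE e N B).card : ℕ) : ℝ) ≤ m * ((N-B:ℕ):ℝ)^n * (N:ℝ)^(R-n) := by
      push_cast
      calc (∑ e ∈ E, ((highE e N B).card : ℝ))
          ≤ ∑ _e ∈ E, (((N-B:ℕ):ℝ)^n * (N:ℝ)^(R-n)) := by
            refine Finset.sum_le_sum ?_
            intro e he
            have h := card_highE e (N := N) (B := B)
            rw [hcards e he] at h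
            have hc : (eᶜ : Finset V).card = R - n := by
              rw [Finset.card_compl, hcards e he, hR]
            rw [hc] at h
            exact_mod_cast h
        _ = m * (((N-B:ℕ):ℝ)^n * (N:ℝ)^(R-n)) := by rw [Finset.sum_const, hm]; simp [nsmul_eq_mul]
        _ = _ := by ring
    have hconfR : ((∑ p ∈ E ×ˢ E, (confE p.1 p.2 N A B).card : ℕ) : ℝ) ≤
        (m:ℝ)^2 * ((B-A:ℕ):ℝ) * ((1:ℝ)/4)^(n-1) * (N:ℝ)^(R-1) := by
      push_cast
      have hpair : ∀ p ∈ E ×ˢ E, ((confE p.1 p.2 N A B).card : ℝ) ≤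
          ((B-A:ℕ):ℝ) * ((1:ℝ)/4)^(n-1) * (N:ℝ)^(R-1) := by
        rintro ⟨e, f⟩ hp
        obtain ⟨he, hf⟩ := mem_product.mp hp
        by_cases hcne : (confE e f N A B).Nonempty
        · obtain ⟨σ₀, hσ₀⟩ := hcne
          obtain ⟨u, huef, -⟩ := (mem_filter.mp hσ₀).2
          have hcap : (e ∩ f).card = 1 := by rw [huef]; exact card_singleton u
          have hcup : (e ∪ f).card = 2*n - 1 := by
            have := Finset.card_union_add_card_inter e f
            rw [hcap, hcards e he, hcards f hf] at this
            omega
          have hcupR : 2*n - 1 ≤ R := by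
            rw [← hcup]
            exact le_trans (Finset.card_le_univ _) (le_of_eq Finset.card_univ)
          have hcompl : ((e ∪ f)ᶜ : Finset V).card = R - (2*n-1) := by
            rw [Finset.card_compl, hcup, hR]
          have h := card_confE (e := e) (f := f) (N := N) (A := A) (B := B) (n := n)
            hBN (hcards e he) (hcards f hf)
          rw [hcompl] at h
          have hcast : ((confE e f N A B).card : ℝ) ≤
              ((∑ t ∈ Finset.Ico A B, t ^ (n-1) * (N - (t+1)) ^ (n-1) : ℕ) : ℝ)
                * (N:ℝ)^(R-(2*n-1)) := by exact_mod_cast h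
          refine le_trans hcast ?_
          -- bound the sum
          have hsum : ((∑ t ∈ Finset.Ico A B, t ^ (n-1) * (N - (t+1)) ^ (n-1) : ℕ) : ℝ)
              ≤ ((B-A:ℕ):ℝ) * (((N:ℝ)^2/4) ^ (n-1)) := by
            push_cast
            have hterm : ∀ t ∈ Finset.Ico A B,
                (t:ℝ) ^ (n-1) * ((N - (t+1) : ℕ):ℝ) ^ (n-1) ≤ ((N:ℝ)^2/4) ^ (n-1) := by
              intro t ht
              have htB : t < B := (mem_Ico.mp ht).2
              have htN : t + 1 ≤ N := by omega
              rw [← mul_pow]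
              refine pow_le_pow_left₀ (by positivity) ?_ _
              have hcast2 : ((N - (t+1) : ℕ):ℝ) = (N:ℝ) - (t+1) := by
                push_cast [htN]; ring
              rw [hcast2]
              have hN1 : (1:ℝ) ≤ (N:ℝ) := by exact_mod_cast hN
              nlinarith [sq_nonneg ((N:ℝ) - 1 - 2*t), sq_nonneg ((N:ℝ)-1)]
            calc (∑ t ∈ Finset.Ico A B, (t:ℝ) ^ (n-1) * ((N - (t+1) : ℕ):ℝ) ^ (n-1))
                ≤ ∑ _t ∈ Finset.Ico A B, ((N:ℝ)^2/4) ^ (n-1) := Finset.sum_le_sum hterm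
              _ = ((B-A:ℕ):ℝ) * (((N:ℝ)^2/4) ^ (n-1)) := by
                  rw [Finset.sum_const, Nat.card_Ico, nsmul_eq_mul]
          refine le_trans (mul_le_mul_of_nonneg_right hsum (by positivity)) (le_of_eq ?_)
          -- ((B-A)) * (N²/4)^{n-1} * N^{R-(2n-1)} = (B-A) * (1/4)^{n-1} * N^{R-1}
          have hee : (2*(n-1) : ℕ) + (R - (2*n-1)) = R - 1 := by omega
          have hexp : ((N:ℝ)^2/4) ^ (n-1) * (N:ℝ)^(R-(2*n-1))
              = ((1:ℝ)/4)^(n-1) * (N:ℝ)^(R-1) := by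
            calc ((N:ℝ)^2/4) ^ (n-1) * (N:ℝ)^(R-(2*n-1))
                = ((1:ℝ)/4)^(n-1) * ((N:ℝ)^(2*(n-1)) * (N:ℝ)^(R-(2*n-1))) := by
                  rw [div_pow, ← pow_mul, div_pow, one_pow]
                  ring
              _ = ((1:ℝ)/4)^(n-1) * (N:ℝ)^(R-1) := by rw [← pow_add, hee]
          rw [mul_assoc, hexp]
          ring
        · rw [Finset.not_nonempty_iff_eq_empty.mp hcne]
          simp
          positivity
      calc (∑ p ∈ E ×ˢ E, ((confE p.1 p.2 N A B).card : ℝ))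
          ≤ ∑ _p ∈ E ×ˢ E, (((B-A:ℕ):ℝ) * ((1:ℝ)/4)^(n-1) * (N:ℝ)^(R-1)) :=
            Finset.sum_le_sum hpair
        _ = (m:ℝ)^2 * (((B-A:ℕ):ℝ) * ((1:ℝ)/4)^(n-1) * (N:ℝ)^(R-1)) := by
            rw [Finset.sum_const, Finset.card_product, nsmul_eq_mul, hm]
            push_cast
            ring
        _ = _ := by ring
    have := le_trans (by exact_mod_cast h3 : ((N:ℝ)^R ≤ _)) (add_le_add (add_le_add
      (add_le_add hinjR hlowR) hhighR) hconfR)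
    exact this
  -- now divide by N^R
  have hN0 : (0:ℝ) < (N:ℝ) := by exact_mod_cast hN
  have hNR0 : (0:ℝ) < (N:ℝ)^R := by positivity
  have hsplit1 : (N:ℝ)^R = (N:ℝ)^(R-1) * (N:ℝ) := by
    rw [← pow_succ]; congr 1; omega
  have hsplit2 : (N:ℝ)^R = (N:ℝ)^(R-n) * (N:ℝ)^n := by
    rw [← pow_add]; congr 1; omega
  refine le_of_mul_le_mul_right ?_ hNR0
  rw [one_mul]
  refine le_trans hchain (le_of_eq ?_)
  rw [add_mul, add_mul, add_mul]
  congr 1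
  · congr 1
    · congr 1
      · rw [hsplit1]; field_simp
      · rw [hsplit2, div_pow]; field_simp
    · rw [hsplit2, div_pow]; field_simp
  · rw [hsplit1]; field_simp

end counting2

lemma key [Fintype V] (E : Finset (Finset V)) (n : ℕ)
    (hn : 1 ≤ n)
    (hcards : ∀ e ∈ E, e.card = n)
    (hcol : ∀ c : V → Fin 2, ∃ A ∈ E, ∃ i : Fin 2, ∀ v ∈ A, c v = i)
    (k p : ℝ) (hk0 : 0 ≤ k) (hp0 : 0 ≤ p) (hp1 : p ≤ 1)
    (hmk : (E.card : ℝ) ≤ k * 2 ^ (n-1))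
    (hlt : k * (1-p) ^ n + k ^ 2 * p < 1) : False := by
  classical
  set W := ((verts E).card : ℝ) with hWdef
  set ε : ℝ := 1 - (k * (1-p) ^ n + k ^ 2 * p) with hε
  have hε0 : 0 < ε := by rw [hε]; linarith
  set N : ℕ := max 1 ⌈(W ^ 2 + 2 * k ^ 2 + 1) / ε⌉₊ with hNdef
  have hN : 0 < N := lt_of_lt_of_le one_pos (le_max_left _ _)
  have hN0 : (0:ℝ) < (N:ℝ) := by exact_mod_cast hN
  have hW0 : 0 ≤ W := by rw [hWdef]; positivity
  have hNge : (W ^ 2 + 2 * k ^ 2 + 1) / ε ≤ (N : ℝ) := by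
    refine le_trans (Nat.le_ceil _) ?_
    exact_mod_cast le_max_right 1 _
  have hNe : W ^ 2 / N + 2 * k ^ 2 / N < ε := by
    have h1 : W ^ 2 + 2 * k ^ 2 + 1 ≤ ε * N := by
      rw [div_le_iff₀ hε0] at hNge
      linarith [hNge]
    have h2 : W ^ 2 + 2 * k ^ 2 < ε * N := by linarith
    rw [← add_div, div_lt_iff₀ hN0]
    linarith [h2]
  set A : ℕ := ⌊(1-p)/2 * N⌋₊ with hAdef
  set B : ℕ := ⌈(1+p)/2 * N⌉₊ with hBdef
  have hx0 : (0:ℝ) ≤ (1-p)/2 * N := mul_nonneg (by linarith) (le_of_lt hN0)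
  have hAB : A ≤ B := by
    refine le_trans (Nat.floor_le_floor (b := (1+p)/2 * N) ?_) (Nat.floor_le_ceil _)
    have : (1-p)/2 ≤ (1+p)/2 := by linarith
    exact mul_le_mul_of_nonneg_right this (le_of_lt hN0)
  have hBN : B ≤ N := by
    rw [hBdef]
    refine Nat.ceil_le.mpr ?_
    calc (1+p)/2 * N ≤ 1 * N := by
          refine mul_le_mul_of_nonneg_right (by linarith) (le_of_lt hN0)
      _ = (N:ℝ) := one_mul _
  have hAle : (A:ℝ)/N ≤ (1-p)/2 := by
    rw [div_le_iff₀ hN0]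
    exact Nat.floor_le hx0
  have hBle : ((N - B : ℕ):ℝ)/N ≤ (1-p)/2 := by
    rw [div_le_iff₀ hN0]
    have hcast : ((N - B : ℕ):ℝ) = (N:ℝ) - B := by
      push_cast [hBN]; ring
    rw [hcast]
    have hBge : (1+p)/2 * N ≤ (B:ℝ) := Nat.le_ceil _
    linarith
  have hBA : ((B - A : ℕ):ℝ)/N ≤ p + 2/N := by
    rw [div_le_iff₀ hN0]
    have hcast : ((B - A : ℕ):ℝ) = (B:ℝ) - A := by
      push_cast [hAB]; ring
    rw [hcast]
    have hBlt : (B:ℝ) < (1+p)/2 * N + 1 := Nat.ceil_lt_add_one (by positivity)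
    have hAgt : (1-p)/2 * N - 1 < (A:ℝ) := by
      have := Nat.lt_floor_add_one ((1-p)/2 * N)
      linarith
    have h2 : (2:ℝ) / N * N = 2 := by field_simp
    rw [add_mul, h2]
    linarith
  have hmain := main_count E n N A B hn hN hAB hBN hcards hcol
  -- term bounds
  have hm0 : (0:ℝ) ≤ E.card := Nat.cast_nonneg _
  have h1p0 : (0:ℝ) ≤ (1-p)/2 := by linarith
  have hAN0 : (0:ℝ) ≤ (A:ℝ)/N := by positivity
  have hBN0 : (0:ℝ) ≤ ((N - B : ℕ):ℝ)/N := by positivity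
  have hpow2 : (0:ℝ) ≤ (2:ℝ)^(n-1) := by positivity
  have h2n : (2:ℝ)^n = 2^(n-1)*2 := by rw [← pow_succ]; congr 1; omega
  have hlow : (E.card : ℝ) * ((A:ℝ)/N)^n ≤ k * (1-p)^n / 2 := by
    have hp1' : ((A:ℝ)/N)^n ≤ ((1-p)/2)^n := pow_le_pow_left₀ hAN0 hAle n
    have : (E.card : ℝ) * ((A:ℝ)/N)^n ≤ (k * 2^(n-1)) * ((1-p)/2)^n := by
      refine mul_le_mul hmk hp1' (by positivity) (by positivity)
    refine le_trans this (le_of_eq ?_)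
    rw [div_pow, h2n]
    field_simp
  have hhigh : (E.card : ℝ) * (((N - B : ℕ):ℝ)/N)^n ≤ k * (1-p)^n / 2 := by
    have hp1' : (((N - B : ℕ):ℝ)/N)^n ≤ ((1-p)/2)^n := pow_le_pow_left₀ hBN0 hBle n
    have : (E.card : ℝ) * (((N - B : ℕ):ℝ)/N)^n ≤ (k * 2^(n-1)) * ((1-p)/2)^n := by
      refine mul_le_mul hmk hp1' (by positivity) (by positivity)
    refine le_trans this (le_of_eq ?_)
    rw [div_pow, h2n]
    field_simp
  have hconf : (E.card : ℝ)^2 * (((B - A : ℕ):ℝ)/N) * ((1:ℝ)/4)^(n-1)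
      ≤ k^2 * p + 2 * k^2 / N := by
    have hsq : (E.card : ℝ)^2 ≤ k^2 * 4^(n-1) := by
      have h := mul_le_mul hmk hmk hm0 (by positivity)
      calc (E.card : ℝ)^2 = (E.card : ℝ) * E.card := sq (E.card : ℝ) ▸ by ring
        _ ≤ (k * 2^(n-1)) * (k * 2^(n-1)) := h
        _ = k^2 * ((2:ℝ)^(n-1) * 2^(n-1)) := by ring
        _ = k^2 * 4^(n-1) := by rw [← mul_pow]; norm_num
    have h41 : ((4:ℝ))^(n-1) * ((1:ℝ)/4)^(n-1) = 1 := by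
      rw [← mul_pow]; norm_num
    calc (E.card : ℝ)^2 * (((B - A : ℕ):ℝ)/N) * ((1:ℝ)/4)^(n-1)
        ≤ (k^2 * 4^(n-1)) * (p + 2/N) * ((1:ℝ)/4)^(n-1) := by
          refine mul_le_mul_of_nonneg_right ?_ (by positivity)
          refine mul_le_mul hsq hBA (by positivity) (by positivity)
      _ = k^2 * (p + 2/N) * (4^(n-1) * ((1:ℝ)/4)^(n-1)) := by ring
      _ = k^2 * p + 2 * k^2 / N := by rw [h41]; ring
  have hfin : (1:ℝ) < 1 := by
    calc (1:ℝ) ≤ _ := hmain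
      _ ≤ W^2/N + k * (1-p)^n / 2 + k * (1-p)^n / 2 + (k^2 * p + 2 * k^2 / N) := by
          exact add_le_add (add_le_add (add_le_add le_rfl hlow) hhigh) hconf
      _ = (W^2/N + 2*k^2/N) + (k * (1-p)^n + k^2 * p) := by ring
      _ < ε + (k * (1-p)^n + k^2 * p) := by linarith [hNe]
      _ = 1 := by rw [hε]; ring
  exact lt_irrefl 1 hfin


end RSproof

/-- Theorem 1 (Radhakrishnan–Srinivasan): for every real `q < √2` there is `n₀` such that
for all `n ≥ n₀`, every `n`-uniform hypergraph with chromatic number greater than `2` has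
at least `q · (n / ln n)^{1/2} · 2^{n−1}` edges. -/
theorem stmt_2 (q : ℝ) (hq : q < Real.sqrt 2) :
    ∃ n₀ : ℕ, ∀ n ≥ n₀,
      ∀ (V : Type) [Fintype V] [DecidableEq V] (E : Finset (Finset V)),
        (∀ A ∈ E, A.card = n) →
        (∀ c : V → Fin 2, ∃ A ∈ E, ∃ i : Fin 2, ∀ v ∈ A, c v = i) →
        (E.card : ℝ) ≥
          q * ((n : ℝ) / Real.log n) ^ ((1 : ℝ) / 2) * (2 : ℝ) ^ (n - 1) := by
  set q' : ℝ := max q 0 with hq'def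
  have hq'0 : 0 ≤ q' := le_max_right q 0
  have hqq' : q ≤ q' := le_max_left q 0
  have hq' : q' < Real.sqrt 2 := max_lt hq (Real.sqrt_pos.mpr two_pos)
  have hq2 : q' ^ 2 < 2 := (Real.lt_sqrt hq'0).mp hq'
  set δ : ℝ := (2 - q' ^ 2) / 8 with hδdef
  have hδ0 : 0 < δ := by rw [hδdef]; linarith
  -- limits
  have hcast : Tendsto (Nat.cast : ℕ → ℝ) atTop atTop := tendsto_natCast_atTop_atTop
  have hlog : Tendsto (fun n : ℕ => Real.log n) atTop atTop :=
    Real.tendsto_log_atTop.comp hcast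
  have t5 : Tendsto (fun n : ℕ => Real.log (Real.log n) / Real.log n) atTop (nhds 0) :=
    (Real.isLittleO_log_id_atTop.tendsto_div_nhds_zero).comp hlog
  have E1 : ∀ᶠ n : ℕ in atTop, 3 ≤ n := eventually_ge_atTop 3
  have E2 : ∀ᶠ n : ℕ in atTop, 1 ≤ Real.log n := hlog.eventually_ge_atTop 1
  have E3 : ∀ᶠ n : ℕ in atTop, Real.log n ≤ (n : ℝ) / 4 := by
    have h := Real.isLittleO_log_id_atTop.def (by norm_num : (0:ℝ) < 1/4)
    have h2 := hcast.eventually h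
    filter_upwards [h2, E1] with n hn hn3
    have hn0 : (0:ℝ) ≤ (n:ℝ) := Nat.cast_nonneg n
    have hlogn : 0 ≤ Real.log n := Real.log_natCast_nonneg n
    simp only [Real.norm_eq_abs, id] at hn
    rw [abs_of_nonneg hlogn, abs_of_nonneg hn0] at hn
    linarith
  have E4 : ∀ᶠ n : ℕ in atTop, q' / Real.log n ≤ δ := by
    filter_upwards [hlog.eventually_ge_atTop ((q' + 1) / δ), E2] with n h1 h2
    rw [div_le_iff₀ (by linarith : (0:ℝ) < Real.log n)]
    rw [div_le_iff₀ hδ0] at h1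
    nlinarith
  have E5 : ∀ᶠ n : ℕ in atTop, 2 * (Real.log (Real.log n) / Real.log n) ≤ δ := by
    filter_upwards [t5.eventually (eventually_le_nhds (by linarith : (0:ℝ) < δ/2))] with n h
    linarith
  obtain ⟨n₀, hn₀⟩ := eventually_atTop.mp (((((E1.and E2).and E3).and E4).and E5))
  refine ⟨n₀, fun n hn V _ _ E hcards hcol => ?_⟩
  obtain ⟨⟨⟨⟨h3n, hL1⟩, hL4⟩, h4⟩, h5⟩ := hn₀ n hn
  set L : ℝ := Real.log n with hLdef
  have hn0 : (0:ℝ) < (n:ℝ) := by exact_mod_cast lt_of_lt_of_le (by norm_num) h3n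
  have hL0 : (0:ℝ) < L := by linarith
  have hXnn : (0:ℝ) ≤ ((n : ℝ) / L) ^ ((1 : ℝ) / 2) :=
    Real.rpow_nonneg (div_nonneg (le_of_lt hn0) (le_of_lt hL0)) _
  by_contra hcon
  push_neg at hcon
  have hmk : (E.card : ℝ) ≤ (q' * ((n : ℝ) / L) ^ ((1 : ℝ) / 2)) * 2 ^ (n-1) := by
    refine le_trans (le_of_lt hcon) ?_
    have : q * ((n : ℝ) / L) ^ ((1 : ℝ) / 2) ≤ q' * ((n : ℝ) / L) ^ ((1 : ℝ) / 2) :=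
      mul_le_mul_of_nonneg_right hqq' hXnn
    exact mul_le_mul_of_nonneg_right this (by positivity)
  set k : ℝ := q' * ((n : ℝ) / L) ^ ((1 : ℝ) / 2) with hkdef
  set p : ℝ := (L / 2 + Real.log L) / n with hpdef
  have hlogL0 : 0 ≤ Real.log L := Real.log_nonneg hL1
  have hp0 : 0 ≤ p := by positivity
  have hp1 : p ≤ 1 := by
    rw [hpdef, div_le_one hn0]
    have hlogLL : Real.log L ≤ L := le_trans (Real.log_le_sub_one_of_pos hL0) (by linarith)
    linarith
  -- rewrite k via sqrt
  have hsq : ((n : ℝ) / L) ^ ((1 : ℝ) / 2) = Real.sqrt n / Real.sqrt L := by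
    rw [← Real.sqrt_eq_rpow, Real.sqrt_div (le_of_lt hn0)]
  have hsqrtn0 : 0 < Real.sqrt n := Real.sqrt_pos.mpr hn0
  have hsqrtL1 : 1 ≤ Real.sqrt L := by
    rw [show (1:ℝ) = Real.sqrt 1 by simp]
    exact Real.sqrt_le_sqrt hL1
  have hsqrtL0 : 0 < Real.sqrt L := by linarith
  -- exp computation
  have hnp : (n:ℝ) * p = L / 2 + Real.log L := by
    rw [hpdef]
    field_simp
  have hexp : Real.exp ((n:ℝ) * p) = Real.sqrt n * L := by
    rw [hnp, Real.exp_add]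
    congr 1
    · rw [show L / 2 = Real.log (Real.sqrt n) from (Real.log_sqrt (le_of_lt hn0)).symm]
      exact Real.exp_log hsqrtn0
    · exact Real.exp_log hL0
  have h1p : (1 - p) ^ n ≤ (Real.sqrt n * L)⁻¹ := by
    have hle : 1 - p ≤ Real.exp (-p) := by
      have := Real.add_one_le_exp (-p)
      linarith
    calc (1 - p) ^ n ≤ (Real.exp (-p)) ^ n := pow_le_pow_left₀ (by linarith) hle n
      _ = Real.exp ((n:ℝ) * (-p)) := (Real.exp_nat_mul _ n).symm
      _ = (Real.exp ((n:ℝ) * p))⁻¹ := by rw [show (n:ℝ) * (-p) = -((n:ℝ)*p) by ring, Real.exp_neg]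
      _ = (Real.sqrt n * L)⁻¹ := by rw [hexp]
  have hk0 : 0 ≤ k := by rw [hkdef]; positivity
  have term1 : k * (1 - p) ^ n ≤ δ := by
    have h1 : k * (1 - p) ^ n ≤ (q' * (Real.sqrt n / Real.sqrt L)) * (Real.sqrt n * L)⁻¹ := by
      rw [hkdef, hsq]
      refine mul_le_mul_of_nonneg_left h1p (by positivity)
    have h2 : (q' * (Real.sqrt n / Real.sqrt L)) * (Real.sqrt n * L)⁻¹
        = q' / (Real.sqrt L * L) := by
      field_simp
    have h3 : q' / (Real.sqrt L * L) ≤ q' / L :=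
      div_le_div_of_nonneg_left hq'0 hL0 (by nlinarith)
    rw [h2] at h1
    exact le_trans h1 (le_trans h3 h4)
  have term2 : k ^ 2 * p ≤ q' ^ 2 / 2 + δ := by
    have hk2 : k ^ 2 = q' ^ 2 * ((n:ℝ) / L) := by
      rw [hkdef, hsq, mul_pow, div_pow, Real.sq_sqrt (le_of_lt hn0), Real.sq_sqrt (le_of_lt hL0)]
    have hkp : k ^ 2 * p = q' ^ 2 * (1/2 + Real.log L / L) := by
      rw [hk2, hpdef]
      field_simp
    rw [hkp]
    have : q' ^ 2 * (Real.log L / L) ≤ 2 * (Real.log L / L) := by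
      refine mul_le_mul_of_nonneg_right (le_of_lt hq2) (by positivity)
    calc q' ^ 2 * (1/2 + Real.log L / L) = q' ^ 2 / 2 + q' ^ 2 * (Real.log L / L) := by ring
      _ ≤ q' ^ 2 / 2 + 2 * (Real.log L / L) := by linarith
      _ ≤ q' ^ 2 / 2 + δ := by linarith [h5]
  have hlt : k * (1 - p) ^ n + k ^ 2 * p < 1 := by
    have : k * (1 - p) ^ n + k ^ 2 * p ≤ δ + (q' ^ 2 / 2 + δ) := add_le_add term1 term2
    rw [hδdef] at this
    linarith
  exact key E n (by omega) hcards hcol k p hk0 hp0 hp1 hmk hlt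
end

section
/- Let H = (V,E) be a hypergraph with finite vertex set, let r ≥ 1 be an integer, and let f : E → {1,…,r} be a labeling of the edges. If there exists a coloring c : V → {1,…,r} such that no edge A ∈ E has all of its vertices colored with the color f(A), then any ordering σ of V that lists the vertices in nondecreasing order of their colors (i.e., c(v) < c(u) implies σ(v) < σ(u)) contains no strong ordered r-chain in σ with respect to f. -/
/-- `A : Fin r → Finset V` is an ordered `r`-chain with respect to the ordering `σ`:
(1) consecutive edges meet in exactly one vertex; (2) non-consecutive edges are disjoint;
(3) every vertex of `A i` precedes (in `σ`) every vertex of `A (i+1)`. -/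
def IsOrderedChain {V : Type*} [DecidableEq V] (σ : V → ℕ) {r : ℕ}
    (A : Fin r → Finset V) : Prop :=
  (∀ i j : Fin r, (i : ℕ) + 1 = (j : ℕ) → (A i ∩ A j).card = 1) ∧
  (∀ i j : Fin r, (i : ℕ) + 1 < (j : ℕ) → A i ∩ A j = ∅) ∧
  (∀ i j : Fin r, (i : ℕ) + 1 = (j : ℕ) → ∀ v ∈ A i, ∀ u ∈ A j, σ v ≤ σ u)

/-- A strong ordered `r`-chain with respect to `σ` and a labeling `f` of the edges:
an ordered `r`-chain whose `i`-th edge carries label `i`. -/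
def IsStrongOrderedChain {V : Type*} [DecidableEq V] (σ : V → ℕ) {r : ℕ}
    (f : Finset V → Fin r) (A : Fin r → Finset V) : Prop :=
  IsOrderedChain σ A ∧ ∀ i : Fin r, f (A i) = i

/-- Proposition 2, (i) ⇒ (ii): if some coloring `c` is such that no edge `A` is entirely
colored `f A`, then any ordering `σ` listing the vertices in nondecreasing order of colors
admits no strong ordered `r`-chain w.r.t. `f`. -/
theorem stmt_7 {V : Type} [Fintype V] [DecidableEq V] (E : Finset (Finset V))
    (r : ℕ) (hr : 1 ≤ r) (f : Finset V → Fin r)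
    (c : V → Fin r) (hc : ∀ A ∈ E, ¬ ∀ v ∈ A, c v = f A)
    (σ : V → ℕ) (hσ : Function.Injective σ)
    (hmono : ∀ v u : V, c v < c u → σ v < σ u) :
    ¬ ∃ A : Fin r → Finset V, (∀ i, A i ∈ E) ∧ IsStrongOrderedChain σ f A := by
  rintro ⟨A, hAE, ⟨⟨-, -, hord⟩, hf⟩⟩
  -- each edge has a vertex with the "wrong" color
  have hbad : ∀ i : Fin r, ∃ v ∈ A i, c v ≠ i := by
    intro i
    have := hc (A i) (hAE i)
    push_neg at this
    obtain ⟨v, hv, hvne⟩ := this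
    exact ⟨v, hv, by rwa [hf i] at hvne⟩
  -- colors are nondecreasing between consecutive edges
  have hcle : ∀ i j : Fin r, (i : ℕ) + 1 = (j : ℕ) →
      ∀ v ∈ A i, ∀ u ∈ A j, c v ≤ c u := by
    intro i j hij v hv u hu
    by_contra h
    push_neg at h
    exact absurd (hord i j hij v hv u hu) (not_le.mpr (hmono u v h))
  -- by induction, edge i has a vertex with color > i
  have key : ∀ n : ℕ, ∀ hn : n < r, ∃ v ∈ A ⟨n, hn⟩, n < (c v : ℕ) := by
    intro n
    induction n with
    | zero =>
      intro hn
      obtain ⟨v, hv, hvne⟩ := hbad ⟨0, hn⟩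
      refine ⟨v, hv, ?_⟩
      by_contra h
      exact hvne (Fin.ext (by simp only [Fin.val_mk]; omega))
    | succ n ih =>
      intro hn
      have hn' : n < r := Nat.lt_of_succ_lt hn
      obtain ⟨v, hv, hvlt⟩ := ih hn'
      obtain ⟨u, hu, hune⟩ := hbad ⟨n + 1, hn⟩
      refine ⟨u, hu, ?_⟩
      have hle : c v ≤ c u := hcle ⟨n, hn'⟩ ⟨n + 1, hn⟩ rfl v hv u hu
      have h1 : n < (c u : ℕ) := lt_of_lt_of_le hvlt hle
      by_contra h
      exact hune (Fin.ext (by simp only [Fin.val_mk] at *; omega))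
  obtain ⟨v, _, hvlt⟩ := key (r - 1) (Nat.sub_lt hr Nat.one_pos)
  have := (c v).isLt
  omega
end
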